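/- The randomized-response Condorcet mechanism — which, when a Condorcet committee W_c exists for (P,k), outputs W_c with probability e^ε/(e^ε + C(m,k) − 1) and each other size-k committee with probability 1/(e^ε + C(m,k) − 1), and otherwise outputs a uniformly random size-k committee — satisfies ε-DP and the e^ε-Condorcet criterion. -/
import Mathlib


open scoped Classical

noncomputable section

/-- A profile assigns to each of the `n` voters an approval ballot (a finite set of alternatives). -/
abbrev Profile (A : Type) (n : ℕ) := Fin n → Finset A

/-- Two profiles are neighboring if they differ in at most one voter's ballot. -/
def Neighboring {A : Type} {n : ℕ} (P P' : Profile A n) : Prop :=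
  ∃ i : Fin n, ∀ j : Fin n, j ≠ i → P j = P' j

/-- `W'` Pareto-dominates `W` in profile `P`. -/
def ParetoDom {A : Type} [DecidableEq A] {n : ℕ} (P : Profile A n) (W' W : Finset A) : Prop :=
  (∀ i, (W ∩ P i).card ≤ (W' ∩ P i).card) ∧ (∃ i, (W ∩ P i).card < (W' ∩ P i).card)

/-- The set of alternatives approved by every voter in `V`. -/
def commonApproved {A : Type} [Fintype A] {n : ℕ} (P : Profile A n) (V : Finset (Fin n)) :
    Finset A :=
  Finset.univ.filter (fun a => ∀ i ∈ V, a ∈ P i)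

/-- `V` is an `ℓ`-cohesive group for `(P, k)`: `|V| ≥ ℓ·n/k` and `|⋂_{i∈V} P i| ≥ ℓ`. -/
def Cohesive {A : Type} [Fintype A] {n : ℕ} (P : Profile A n) (k ℓ : ℕ)
    (V : Finset (Fin n)) : Prop :=
  ℓ * n ≤ V.card * k ∧ ℓ ≤ (commonApproved P V).card

/-- Committee `W` (of size `k`) satisfies justified representation for `(P, k)`. -/
def JRsat {A : Type} [Fintype A] [DecidableEq A] {n : ℕ} (P : Profile A n) (k : ℕ)
    (W : Finset A) : Prop :=
  W.card = k ∧ ∀ V : Finset (Fin n), Cohesive P k 1 V → ∃ i ∈ V, (P i ∩ W).Nonempty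

/-- Committee `W` satisfies proportional justified representation for `(P, k)`. -/
def PJRsat {A : Type} [Fintype A] [DecidableEq A] {n : ℕ} (P : Profile A n) (k : ℕ)
    (W : Finset A) : Prop :=
  W.card = k ∧ ∀ (ℓ : ℕ) (V : Finset (Fin n)), 1 ≤ ℓ → Cohesive P k ℓ V →
    ℓ ≤ (W ∩ V.biUnion P).card

/-- Committee `W` satisfies extended justified representation for `(P, k)`. -/
def EJRsat {A : Type} [Fintype A] [DecidableEq A] {n : ℕ} (P : Profile A n) (k : ℕ)
    (W : Finset A) : Prop :=
  W.card = k ∧ ∀ (ℓ : ℕ) (V : Finset (Fin n)), 1 ≤ ℓ → Cohesive P k ℓ V →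
    ∃ i ∈ V, ℓ ≤ (P i ∩ W).card

/-- `W` is a Condorcet committee for `(P, k)`: against every other size-`k` committee,
strictly more than half of the voters prefer `W`. -/
def CondorcetCommittee {A : Type} [Fintype A] [DecidableEq A] {n : ℕ} (P : Profile A n)
    (k : ℕ) (W : Finset A) : Prop :=
  W.card = k ∧ ∀ W' : Finset A, W'.card = k → W' ≠ W →
    n < 2 * (Finset.univ.filter
      (fun i : Fin n => (P i ∩ W').card < (P i ∩ W).card)).card

/-- A randomized approval-based committee (ABC) rule: for each profile and committee size `k`,
a probability distribution over the size-`k` committees. -/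
structure ABCRule (A : Type) [Fintype A] [DecidableEq A] (n : ℕ) where
  prob : Profile A n → ℕ → Finset A → ℝ
  nonneg : ∀ P k W, 0 ≤ prob P k W
  size_eq : ∀ P k W, prob P k W ≠ 0 → W.card = k
  sum_one : ∀ P k, k ≤ Fintype.card A →
    ∑ W ∈ Finset.univ.filter (fun W : Finset A => W.card = k), prob P k W = 1

variable {A : Type} [Fintype A] [DecidableEq A] {n : ℕ}

/-- ε-differential privacy at committee size `k`. -/
def DPAt (f : ABCRule A n) (k : ℕ) (ε : ℝ) : Prop :=
  ∀ (P P' : Profile A n) (W : Finset A),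
    Neighboring P P' → f.prob P k W ≤ Real.exp ε * f.prob P' k W

/-- ε-differential privacy: single-ballot changes alter each committee's winning
probability by a factor of at most `e^ε`. -/
def DP (f : ABCRule A n) (ε : ℝ) : Prop := ∀ k : ℕ, DPAt f k ε

/-- Neutrality: the rule commutes with permutations of the alternatives. -/
def Neutral (f : ABCRule A n) : Prop :=
  ∀ (σ : Equiv.Perm A) (P : Profile A n) (k : ℕ) (W : Finset A),
    f.prob (fun i => (P i).image σ) k (W.image σ) = f.prob P k W

/-- θ-JR: each JR committee wins with probability at least θ times that of each non-JR one. -/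
def ThetaJR (f : ABCRule A n) (θ : ℝ) : Prop :=
  ∀ (P : Profile A n) (k : ℕ) (W₁ W₂ : Finset A),
    JRsat P k W₁ → W₂.card = k → ¬ JRsat P k W₂ →
      θ * f.prob P k W₂ ≤ f.prob P k W₁

/-- ρ-PJR. -/
def RhoPJR (f : ABCRule A n) (ρ : ℝ) : Prop :=
  ∀ (P : Profile A n) (k : ℕ) (W₁ W₂ : Finset A),
    PJRsat P k W₁ → W₂.card = k → ¬ PJRsat P k W₂ →
      ρ * f.prob P k W₂ ≤ f.prob P k W₁

/-- κ-EJR. -/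
def KappaEJR (f : ABCRule A n) (κ : ℝ) : Prop :=
  ∀ (P : Profile A n) (k : ℕ) (W₁ W₂ : Finset A),
    EJRsat P k W₁ → W₂.card = k → ¬ EJRsat P k W₂ →
      κ * f.prob P k W₂ ≤ f.prob P k W₁

/-- Exact Condorcet criterion: whenever a Condorcet committee exists, it wins with
probability one. -/
def CondorcetCrit (f : ABCRule A n) : Prop :=
  ∀ (P : Profile A n) (k : ℕ) (W : Finset A),
    CondorcetCommittee P k W → f.prob P k W = 1

/-- η-Condorcet criterion. -/
def EtaCC (f : ABCRule A n) (η : ℝ) : Prop :=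
  ∀ (P : Profile A n) (k : ℕ) (Wc W : Finset A),
    CondorcetCommittee P k Wc → W.card = k → W ≠ Wc →
      η * f.prob P k W ≤ f.prob P k Wc

/-- Exact Pareto efficiency at committee size `k`: no committee in the support is
Pareto-dominated by another size-`k` committee. -/
def ParetoEffAt (f : ABCRule A n) (k : ℕ) : Prop :=
  ∀ (P : Profile A n) (W : Finset A), f.prob P k W ≠ 0 →
    ∀ W' : Finset A, W'.card = k → ¬ ParetoDom P W' W

/-- β-Pareto efficiency at committee size `k`. -/
def BetaPEAt (f : ABCRule A n) (k : ℕ) (β : ℝ) : Prop :=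
  ∀ (P : Profile A n) (W₁ W₂ : Finset A), W₁.card = k → W₂.card = k →
    ParetoDom P W₁ W₂ → β * f.prob P k W₂ ≤ f.prob P k W₁

/-- The approval voting score of a committee. -/
def AV (P : Profile A n) (W : Finset A) : ℕ := ∑ j, (P j ∩ W).card

/-- The set of size-`k` committees satisfying JR for `(P, k)`. -/
def JRset (P : Profile A n) (k : ℕ) : Finset (Finset A) :=
  Finset.univ.filter (fun W => JRsat P k W)

/-- The randomized-response Condorcet mechanism (W_c gets probability
e^ε/(e^ε + C(m,k) − 1), every other size-k committee 1/(e^ε + C(m,k) − 1); uniform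
when no Condorcet committee exists) satisfies ε-DP and the e^ε-Condorcet criterion. -/
theorem randomizedResponse_condorcet (f : ABCRule A n) (ε : ℝ) (hε : 0 < ε)
    (hf₁ : ∀ (P : Profile A n) (k : ℕ) (Wc W : Finset A),
      CondorcetCommittee P k Wc → W.card = k →
        f.prob P k W =
          (if W = Wc then Real.exp ε else 1) /
            (Real.exp ε + (Nat.choose (Fintype.card A) k : ℝ) - 1))
    (hf₂ : ∀ (P : Profile A n) (k : ℕ) (W : Finset A), W.card = k →
      (¬ ∃ Wc : Finset A, CondorcetCommittee P k Wc) →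
        f.prob P k W = ((Nat.choose (Fintype.card A) k : ℝ))⁻¹) :
    DP f ε ∧ EtaCC f (Real.exp ε) := by
  have he : 1 < Real.exp ε := by
    have := Real.exp_lt_exp.mpr hε
    simpa using this
  constructor
  · intro k P P' W _
    by_cases hW : W.card = k
    · have hk : k ≤ Fintype.card A := hW ▸ Finset.card_le_univ W
      set C : ℝ := (Nat.choose (Fintype.card A) k : ℝ) with hCdef
      have hC : 1 ≤ C := by rw [hCdef]; exact_mod_cast Nat.one_le_iff_ne_zero.mpr (Nat.choose_pos hk).ne'
      have hC0 : 0 < C := lt_of_lt_of_le one_pos hC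
      have hD : 0 < Real.exp ε + C - 1 := by linarith
      by_cases h1 : ∃ Wc, CondorcetCommittee P k Wc
      · obtain ⟨Wc, hWc⟩ := h1
        by_cases h2 : ∃ Wc', CondorcetCommittee P' k Wc'
        · obtain ⟨Wc', hWc'⟩ := h2
          rw [hf₁ P k Wc W hWc hW, hf₁ P' k Wc' W hWc' hW, ← mul_div_assoc]
          apply (div_le_div_iff_of_pos_right hD).mpr
          have hE := Real.exp_pos ε
          split_ifs <;> nlinarith
        · rw [hf₁ P k Wc W hWc hW, hf₂ P' k W hW h2, ← div_eq_mul_inv]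
          apply div_le_div₀ (Real.exp_pos ε).le _ hC0 (by linarith)
          split_ifs <;> linarith
      · by_cases h2 : ∃ Wc', CondorcetCommittee P' k Wc'
        · obtain ⟨Wc', hWc'⟩ := h2
          rw [hf₂ P k W hW h1, hf₁ P' k Wc' W hWc' hW, ← mul_div_assoc,
            inv_eq_one_div, div_le_div_iff₀ hC0 hD]
          have h3 : 0 ≤ Real.exp ε * C * (Real.exp ε - 1) :=
            mul_nonneg (mul_pos (Real.exp_pos ε) hC0).le (by linarith)
          have h4 : 0 ≤ (Real.exp ε - 1) * (C - 1) :=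
            mul_nonneg (by linarith) (by linarith)
          split_ifs <;> nlinarith
        · rw [hf₂ P k W hW h1, hf₂ P' k W hW h2]
          exact le_mul_of_one_le_left (inv_nonneg.mpr hC0.le) he.le
    · have h0 : f.prob P k W = 0 := by
        by_contra h; exact hW (f.size_eq P k W h)
      rw [h0]
      exact mul_nonneg (Real.exp_pos ε).le (f.nonneg P' k W)
  · intro P k Wc W hWc hWk hne
    rw [hf₁ P k Wc Wc hWc hWc.1, hf₁ P k Wc W hWc hWk, if_pos rfl, if_neg hne,
      mul_one_div]
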